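/- For all parameters α, β and all n ≥ 0 and all x, y: Σ_{k=0}^{n} [(α+β+2k+1)(α+β+1)_k / Γ(α+β+n+k+2)] · P_k^{(α,β)}(x) · P_{n-k}^{(-n-α-1,-n-β-1)}(y) = (1/Γ(α+β+1)) · (1/n!) · ((x-y)/2)^n. -/

import Mathlib

open Finset Real

/-- Pochhammer symbol (rising factorial) `(a)_k`. -/
noncomputable def poch (a : ℝ) (k : ℕ) : ℝ := (ascPochhammer ℝ k).eval a

/-- Classical Laguerre polynomial `L_n^{(α)}(x)` for arbitrary parameter α. -/
noncomputable def lag (α : ℝ) (n : ℕ) (x : ℝ) : ℝ :=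
  ∑ k ∈ Finset.range (n + 1),
    (-1 : ℝ) ^ k * (poch (α + k + 1) (n - k) / (Nat.factorial (n - k))) *
      x ^ k / (Nat.factorial k)

/-- Classical Jacobi polynomial `P_n^{(α,β)}(x)` for arbitrary parameters. -/
noncomputable def jac (α β : ℝ) (n : ℕ) (x : ℝ) : ℝ :=
  ∑ k ∈ Finset.range (n + 1),
    (poch ((n : ℝ) + α + β + 1) k / (Nat.factorial k)) *
      (poch (α + k + 1) (n - k) / (Nat.factorial (n - k))) * ((x - 1) / 2) ^ k

/-- Generalized binomial coefficient `C(x, k)`. -/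
noncomputable def genBinom (x : ℝ) (k : ℕ) : ℝ :=
  (∏ j ∈ Finset.range k, (x - j)) / (Nat.factorial k)

/-- Charlier polynomial `C_n^{(a)}(x)`. -/
noncomputable def charlier (a : ℝ) (n : ℕ) (x : ℝ) : ℝ :=
  ∑ k ∈ Finset.range (n + 1), genBinom x k * (-a) ^ (n - k) / (Nat.factorial (n - k))

lemma poch_zero (a : ℝ) : poch a 0 = 1 := by simp [poch]

lemma poch_succ (a : ℝ) (k : ℕ) : poch a (k+1) = poch a k * (a + k) := by
  simp [poch, ascPochhammer_succ_eval]

lemma poch_one (a : ℝ) : poch a 1 = a := by simp [poch_succ, poch_zero]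

lemma poch_add (a : ℝ) (m n : ℕ) : poch a (m + n) = poch a m * poch (a + m) n := by
  have h := ascPochhammer_mul (S := ℝ) m n
  have := congrArg (Polynomial.eval a) h
  simpa [poch, Polynomial.eval_comp] using this.symm

lemma poch_ne_zero {a : ℝ} {m : ℕ} (h : ∀ t : ℕ, t < m → a + t ≠ 0) : poch a m ≠ 0 := by
  induction m with
  | zero => simp [poch_zero]
  | succ k ih =>
    rw [poch_succ]
    exact mul_ne_zero (ih fun t ht => h t (by omega)) (h k (by omega))

lemma poch_neg (a : ℝ) (m : ℕ) : poch a m = (-1)^m * poch (-a - m + 1) m := by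
  induction m generalizing a with
  | zero => simp [poch_zero]
  | succ k ih =>
    rw [poch_succ, ih]
    have h1 : (-a - ↑(k+1) + 1) = -a - k := by push_cast; ring
    rw [h1, show k + 1 = 1 + k from by omega, poch_add, poch_one]
    have h2 : (-a - ↑k + 1) = (-a - ↑k + 1) := rfl
    push_cast
    ring_nf

lemma alt_diff (f : ℕ → ℝ) (N : ℕ) :
    ∑ l ∈ range (N+2), (-1:ℝ)^l * ((N+1).choose l) * f l
      = ∑ l ∈ range (N+1), (-1:ℝ)^l * (N.choose l) * (f l - f (l+1)) := by
  have h1 : ∑ l ∈ range (N+2), (-1:ℝ)^l * ((N+1).choose l) * f l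
      = f 0 + ∑ l ∈ range (N+1), (-1:ℝ)^(l+1) * ((N+1).choose (l+1)) * f (l+1) := by
    rw [Finset.sum_range_succ' (fun l => (-1:ℝ)^l * ((N+1).choose l) * f l) (N+1)]
    simp [add_comm]
  rw [h1]
  have h2 : ∀ l ∈ range (N+1), (-1:ℝ)^(l+1) * ((N+1).choose (l+1)) * f (l+1)
      = (-1:ℝ)^(l+1) * (N.choose l) * f (l+1) + (-1:ℝ)^(l+1) * (N.choose (l+1)) * f (l+1) := by
    intro l _
    rw [Nat.choose_succ_succ]
    push_cast
    ring
  rw [Finset.sum_congr rfl h2, Finset.sum_add_distrib]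
  have h3 : f 0 + ∑ l ∈ range (N+1), (-1:ℝ)^(l+1) * (N.choose (l+1)) * f (l+1)
      = ∑ l ∈ range (N+2), (-1:ℝ)^l * (N.choose l) * f l := by
    rw [Finset.sum_range_succ' (fun l => (-1:ℝ)^l * (N.choose l) * f l) (N+1)]
    simp [add_comm]
  have h4 : ∑ l ∈ range (N+2), (-1:ℝ)^l * (N.choose l) * f l
      = ∑ l ∈ range (N+1), (-1:ℝ)^l * (N.choose l) * f l := by
    rw [Finset.sum_range_succ]
    simp [Nat.choose_succ_self]
  have h5 : ∑ l ∈ range (N+1), (-1:ℝ)^(l+1) * (N.choose l) * f (l+1)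
      = ∑ l ∈ range (N+1), -((-1:ℝ)^l * (N.choose l) * f (l+1)) := by
    apply Finset.sum_congr rfl; intro l _; rw [pow_succ]; ring
  have h6 : ∑ l ∈ range (N+1), (-1:ℝ)^l * (N.choose l) * (f l - f (l+1))
      = ∑ l ∈ range (N+1), (-1:ℝ)^l * (N.choose l) * f l
        + ∑ l ∈ range (N+1), -((-1:ℝ)^l * (N.choose l) * f (l+1)) := by
    rw [← Finset.sum_add_distrib]
    apply Finset.sum_congr rfl; intro l _; ring
  rw [h5, h6, ← h4, ← h3]
  ring

lemma Wsum (a : ℝ) (ha : ∀ t : ℕ, a + t ≠ 0) :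
    ∀ (N M : ℕ), ∑ l ∈ range (N+1), (-1:ℝ)^l * (N.choose l) / poch (a+l) M
      = poch M N / poch a (M+N) := by
  intro N
  induction N with
  | zero => intro M; simp [poch_zero]
  | succ N ih =>
    intro M
    have key : ∀ l : ℕ, (poch (a+l) M)⁻¹ - (poch (a+(l+1:ℕ)) M)⁻¹ = M / poch (a+l) (M+1) := by
      intro l
      have e1 : poch (a+l) (M+1) = poch (a+l) M * (a+l+M) := poch_succ _ _
      have e2 : poch (a+l) (M+1) = (a+l) * poch (a+l+1) M := by
        rw [show M + 1 = 1 + M from by omega, poch_add, poch_one]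
        norm_num
      have n1 : poch (a+l) M ≠ 0 := poch_ne_zero (fun t ht => by
        have := ha (l+t); push_cast at this ⊢; intro h; apply this; linarith)
      have n2 : poch (a+l+1) M ≠ 0 := poch_ne_zero (fun t ht => by
        have := ha (l+1+t); push_cast at this ⊢; intro h; apply this; linarith)
      have n3 : (a+l+M) ≠ 0 := by
        have := ha (l+M); push_cast at this ⊢; intro h; apply this; linarith
      have n5 : (a+l) ≠ 0 := ha l
      have g1 : (poch (a+l) M)⁻¹ = (a+l+M)/poch (a+l) (M+1) := by
        rw [e1, inv_eq_one_div, div_eq_div_iff n1 (mul_ne_zero n1 n3)]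
        ring
      have g2 : (poch (a+(l+1:ℕ)) M)⁻¹ = (a+l)/poch (a+l) (M+1) := by
        have e3 : (a+((l+1:ℕ)):ℝ) = a+l+1 := by push_cast; ring
        rw [e3, e2, inv_eq_one_div, div_eq_div_iff n2 (mul_ne_zero n5 n2)]
        ring
      rw [g1, g2, div_sub_div_same, show a+↑l+↑M-(a+↑l) = (M:ℝ) from by ring]
    calc ∑ l ∈ range (N+2), (-1:ℝ)^l * ((N+1).choose l) / poch (a+l) M
        = ∑ l ∈ range (N+2), (-1:ℝ)^l * ((N+1).choose l) * (poch (a+l) M)⁻¹ := by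
          apply Finset.sum_congr rfl; intro l _; rw [div_eq_mul_inv]
      _ = ∑ l ∈ range (N+1), (-1:ℝ)^l * (N.choose l) * ((poch (a+l) M)⁻¹ - (poch (a+((l+1:ℕ)):ℝ) M)⁻¹) := by
          exact alt_diff (fun l => (poch (a+(l:ℝ)) M)⁻¹) N
      _ = ∑ l ∈ range (N+1), (-1:ℝ)^l * (N.choose l) / poch (a+l) (M+1) * M := by
          apply Finset.sum_congr rfl; intro l _
          rw [key l, div_eq_mul_inv, div_eq_mul_inv]
          ring
      _ = poch (M+1:ℕ) N / poch a (M+1+N) * M := by rw [← Finset.sum_mul, ih (M+1)]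
      _ = poch M (N+1) / poch a (M+(N+1)) := by
          have e4 : poch (M:ℝ) (N+1) = M * poch ((M:ℝ)+1) N := by
            rw [show N + 1 = 1 + N from by omega, poch_add, poch_one]
            norm_num
          have e5 : ((M+1:ℕ):ℝ) = (M:ℝ)+1 := by push_cast; ring
          rw [e4, show M+1+N = M+(N+1) from by omega, e5]
          ring

lemma Ssum (c : ℝ) (hc : ∀ m : ℕ, c + m ≠ 0) (N : ℕ) :
    ∑ l ∈ range (N+1), (-1:ℝ)^l * (c+2*l) / (poch (c+l) (N+1) * l.factorial * (N-l).factorial)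
      = if N = 0 then 1 else 0 := by
  have hc1 : ∀ t : ℕ, (c+1) + t ≠ 0 := fun t => by
    have := hc (1+t); push_cast at this ⊢; intro h; apply this; linarith
  have hpoch1 : ∀ (l M : ℕ), poch (c+1+l) M ≠ 0 := fun l M => poch_ne_zero (fun t ht => by
    have := hc (1+l+t); push_cast at this ⊢; intro h; apply this; linarith)
  have hpoch0 : ∀ (l M : ℕ), poch (c+l) M ≠ 0 := fun l M => poch_ne_zero (fun t ht => by
    have := hc (l+t); push_cast at this ⊢; intro h; apply this; linarith)
  rcases Nat.eq_zero_or_pos N with h0 | hpos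
  · subst h0
    rw [if_pos rfl, Finset.sum_range_one]
    have h0 : c ≠ 0 := by have := hc 0; push_cast at this; simpa using this
    have : poch (c + (0:ℕ)) (0+1) = c := by
      rw [poch_succ, poch_zero]
      push_cast; ring
    rw [this]
    norm_num
    exact h0
  · obtain ⟨K, rfl⟩ : ∃ K, N = K+1 := ⟨N-1, by omega⟩
    rw [if_neg (by omega)]
    set N := K + 1 with hN
    have hsplit : ∀ l ∈ range (N+1),
        (-1:ℝ)^l * (c+2*l) / (poch (c+l) (N+1) * l.factorial * (N-l).factorial)
        = (-1:ℝ)^l * (N.choose l) / poch (c+1+l) N * ((N.factorial:ℝ))⁻¹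
          + (-1:ℝ)^l * l / (poch (c+l) (N+1) * l.factorial * (N-l).factorial) := by
      intro l hl
      have hl' : l ≤ N := by simp at hl; omega
      have e1 : poch (c+l) (N+1) = (c+l) * poch (c+1+l) N := by
        rw [show N+1 = 1+N from by omega, poch_add, poch_one]
        push_cast
        ring_nf
      have hfac : (N.factorial:ℝ) = (N.choose l) * l.factorial * (N-l).factorial := by
        exact_mod_cast (Nat.choose_mul_factorial_mul_factorial hl').symm
      have hch : (N.choose l : ℝ) ≠ 0 := by
        have := Nat.choose_pos hl'; positivity
      rw [e1, hfac]
      have hcl : c + (l:ℝ) ≠ 0 := hc l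
      have hf1 : (l.factorial:ℝ) ≠ 0 := by positivity
      have hf2 : ((N-l).factorial:ℝ) ≠ 0 := by positivity
      have hp := hpoch1 l N
      field_simp
      ring
    rw [Finset.sum_congr rfl hsplit, Finset.sum_add_distrib, ← Finset.sum_mul]
    have W1 : ∑ l ∈ range (N+1), (-1:ℝ)^l * (N.choose l) / poch (c+1+l) N
        = poch (N:ℝ) N / poch (c+1) (N+N) := Wsum (c+1) hc1 N N
    have hB : ∑ l ∈ range (N+1), (-1:ℝ)^l * l / (poch (c+l) (N+1) * l.factorial * (N-l).factorial)
        = -(poch ((N+1:ℕ):ℝ) K / poch (c+1) (N+1+K) * ((K.factorial:ℝ))⁻¹) := by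
      rw [Finset.sum_range_succ' (fun l => (-1:ℝ)^l * l / (poch (c+l) (N+1) * l.factorial * (N-l).factorial)) N]
      have hz : (-1:ℝ)^0 * (0:ℕ) / (poch (c+(0:ℕ)) (N+1) * (Nat.factorial 0) * ((N-0).factorial)) = 0 := by
        norm_num
      rw [hz, add_zero]
      have hterm : ∀ m ∈ range N, (-1:ℝ)^(m+1) * ((m+1:ℕ):ℝ) / (poch (c+((m+1:ℕ):ℝ)) (N+1) * ((m+1).factorial) * ((N-(m+1)).factorial))
          = -((-1:ℝ)^m * (K.choose m) / poch (c+1+m) (N+1) * ((K.factorial:ℝ))⁻¹) := by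
        intro m hm
        have hm' : m ≤ K := by simp at hm; omega
        have e2 : (c+((m+1:ℕ):ℝ)) = c+1+m := by push_cast; ring
        have e3 : N - (m+1) = K - m := by omega
        have e4 : ((m+1).factorial : ℝ) = (m+1) * m.factorial := by
          rw [Nat.factorial_succ]; push_cast; ring
        have hfacK : (K.factorial:ℝ) = (K.choose m) * m.factorial * (K-m).factorial := by
          exact_mod_cast (Nat.choose_mul_factorial_mul_factorial hm').symm
        have hchK : (K.choose m : ℝ) ≠ 0 := by
          have := Nat.choose_pos hm'; positivity
        rw [e2, e3, e4, hfacK, pow_succ]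
        have hm1 : ((m:ℝ)+1) ≠ 0 := by positivity
        have hf1 : (m.factorial:ℝ) ≠ 0 := by positivity
        have hf2 : ((K-m).factorial:ℝ) ≠ 0 := by positivity
        have hp := hpoch1 m (N+1)
        field_simp
        ring
        rw [Nat.cast_add, Nat.cast_one]
        ring
      rw [Finset.sum_congr rfl hterm, Finset.sum_neg_distrib, ← Finset.sum_mul]
      have W2 := Wsum (c+1) hc1 K (N+1)
      rw [← hN] at W2
      rw [W2]
    rw [W1, hB]
    have e5 : poch (N:ℝ) N = N * poch ((N:ℝ)+1) K := by
      rw [show N = 1+K from by omega]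
      nth_rewrite 1 [poch_add]
      rw [poch_one]
      norm_num
    have e6 : ((N+1:ℕ):ℝ) = (N:ℝ)+1 := by push_cast; ring
    have e7 : N+1+K = N+N := by omega
    have e8 : (N.factorial:ℝ) = N * K.factorial := by
      rw [show N = K+1 from rfl, Nat.factorial_succ]; push_cast; ring
    rw [e5, e6, e7, e8]
    have hNz : (N:ℝ) ≠ 0 := by positivity
    have hKz : (K.factorial:ℝ) ≠ 0 := by positivity
    have hPP : poch (c+1) (N+N) ≠ 0 := poch_ne_zero (fun t _ => hc1 t)
    field_simp
    ring

lemma tri3 {M : Type*} [AddCommMonoid M] (n : ℕ) (f : ℕ → ℕ → ℕ → M) :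
    ∑ k ∈ range (n+1), ∑ j ∈ range (n-k+1), ∑ i ∈ range (k+1), f k i j
      = ∑ i ∈ range (n+1), ∑ j ∈ range (n+1-i), ∑ l ∈ range (n+1-i-j), f (i+l) i j := by
  rw [Finset.sum_sigma' (range (n+1)) (fun k => range (n-k+1))
      (fun k j => ∑ i ∈ range (k+1), f k i j)]
  rw [Finset.sum_sigma' ((range (n+1)).sigma (fun k => range (n-k+1)))
      (fun p => range (p.1+1)) (fun p i => f p.1 i p.2)]
  rw [Finset.sum_sigma' (range (n+1)) (fun i => range (n+1-i))
      (fun i j => ∑ l ∈ range (n+1-i-j), f (i+l) i j)]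
  rw [Finset.sum_sigma' ((range (n+1)).sigma (fun i => range (n+1-i)))
      (fun p => range (n+1-p.1-p.2)) (fun p l => f (p.1+l) p.1 p.2)]
  refine Finset.sum_nbij' (fun x => ⟨⟨x.2, x.1.2⟩, x.1.1 - x.2⟩)
    (fun x => ⟨⟨x.1.1 + x.2, x.1.2⟩, x.1.1⟩) ?_ ?_ ?_ ?_ ?_
  · rintro ⟨⟨k, j⟩, i⟩ h
    simp only [Finset.mem_sigma, Finset.mem_range] at h ⊢
    omega
  · rintro ⟨⟨i, j⟩, l⟩ h
    simp only [Finset.mem_sigma, Finset.mem_range] at h ⊢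
    omega
  · rintro ⟨⟨k, j⟩, i⟩ h
    simp only [Finset.mem_sigma, Finset.mem_range] at h
    have : i + (k - i) = k := by omega
    simp only [this]
  · rintro ⟨⟨i, j⟩, l⟩ h
    simp only [Finset.mem_sigma, Finset.mem_range] at h
    have : i + l - i = l := by omega
    simp only [this]
  · rintro ⟨⟨k, j⟩, i⟩ h
    simp only [Finset.mem_sigma, Finset.mem_range] at h
    have : i + (k - i) = k := by omega
    simp only [this]

set_option maxHeartbeats 1000000 in
lemma term_eq (α β : ℝ) (x y : ℝ) (n i j l : ℕ) (hs : ∀ m : ℕ, α + β + 1 + (m:ℝ) ≠ 0)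
    (h : i + j + l ≤ n) :
    (α + β + 2*((i+l:ℕ):ℝ) + 1) * poch (α+β+1) (i+l) / poch (α+β+1) (n+(i+l)+1) *
      (poch (((i+l:ℕ):ℝ)+α+β+1) i / (Nat.factorial i) *
        (poch (α+(i:ℝ)+1) ((i+l)-i) / (Nat.factorial ((i+l)-i))) * ((x-1)/2)^i) *
      (poch (((n-(i+l):ℕ):ℝ) + (-(n:ℝ)-α-1) + (-(n:ℝ)-β-1) + 1) j / (Nat.factorial j) *
        (poch ((-(n:ℝ)-α-1) + (j:ℝ) + 1) (n-(i+l)-j) / (Nat.factorial (n-(i+l)-j))) * ((y-1)/2)^j)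
    = (poch (α+(i:ℝ)+1) (n-i-j) / ((Nat.factorial i : ℝ) * (Nat.factorial j : ℝ)) *
        ((x-1)/2)^i * ((y-1)/2)^j * (-1:ℝ)^(n-i))
      * ((-1:ℝ)^l * ((α+β+1+2*(i:ℝ))+2*(l:ℝ)) /
          (poch ((α+β+1+2*(i:ℝ))+(l:ℝ)) ((n-i-j)+1) * (Nat.factorial l) * (Nat.factorial ((n-i-j)-l)))) := by
  have cN : ((n-i-j:ℕ):ℝ) = (n:ℝ)-i-j := by
    rw [Nat.cast_sub (by omega : j ≤ n - i), Nat.cast_sub (by omega : i ≤ n)]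
  have c1 : ((n-(i+l):ℕ):ℝ) = (n:ℝ)-i-l := by
    rw [Nat.cast_sub (by omega : i + l ≤ n)]; push_cast; ring
  rw [show (i+l)-i = l from by omega, show n-(i+l)-j = (n-i-j)-l from by omega, c1]
  have r1 : poch (α+β+1) (n+(i+l)+1) = poch (α+β+1) (i+l) * poch (α+β+1+((i+l:ℕ):ℝ)) (n+1) := by
    rw [show n+(i+l)+1 = (i+l)+(n+1) from by omega, poch_add]
  have r2 : poch (α+β+1+((i+l:ℕ):ℝ)) (n+1)
      = poch (α+β+1+((i+l:ℕ):ℝ)) i * (poch (α+β+1+2*(i:ℝ)+(l:ℝ)) ((n-i-j)+1)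
          * poch (α+β+1+2*(i:ℝ)+(l:ℝ)+(((n-i-j)+1:ℕ):ℝ)) j) := by
    rw [show n+1 = i+(((n-i-j)+1)+j) from by omega, poch_add, poch_add,
      show α+β+1+((i+l:ℕ):ℝ)+(i:ℕ) = α+β+1+2*(i:ℝ)+(l:ℝ) from by push_cast; ring]
  have r3 : poch (((i+l:ℕ):ℝ)+α+β+1) i = poch (α+β+1+((i+l:ℕ):ℝ)) i := by
    rw [show ((i+l:ℕ):ℝ)+α+β+1 = α+β+1+((i+l:ℕ):ℝ) from by ring]
  have r4 : poch ((n:ℝ)-i-l + (-(n:ℝ)-α-1) + (-(n:ℝ)-β-1) + 1) j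
      = (-1:ℝ)^j * poch (α+β+1+2*(i:ℝ)+(l:ℝ)+(((n-i-j)+1:ℕ):ℝ)) j := by
    rw [poch_neg]
    congr 2
    push_cast [cN]
    ring
  have r5 : poch ((-(n:ℝ)-α-1) + (j:ℝ) + 1) ((n-i-j)-l)
      = (-1:ℝ)^((n-i-j)-l) * poch (α+(i:ℝ)+1+(l:ℝ)) ((n-i-j)-l) := by
    rw [poch_neg]
    congr 2
    rw [Nat.cast_sub (by omega : l ≤ n-i-j), cN]
    ring
  have r6 : poch (α+(i:ℝ)+1) (n-i-j) = poch (α+(i:ℝ)+1) l * poch (α+(i:ℝ)+1+(l:ℝ)) ((n-i-j)-l) := by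
    nth_rewrite 1 [show n-i-j = l + ((n-i-j)-l) from by omega]
    rw [poch_add]
  have hsign : (-1:ℝ)^j * (-1:ℝ)^((n-i-j)-l) = (-1:ℝ)^(n-i) * (-1:ℝ)^l := by
    have h2 : (-1:ℝ)^(l+l) = 1 := Even.neg_one_pow ⟨l, rfl⟩
    rw [← pow_add, ← pow_add]
    conv_rhs => rw [show (n-i) + l = (j + ((n-i-j)-l)) + (l+l) from by omega, pow_add, h2]
    rw [mul_one]
  have np1 : poch (α+β+1) (i+l) ≠ 0 := poch_ne_zero (fun t _ => hs t)
  have np2 : poch (α+β+1+((i+l:ℕ):ℝ)) i ≠ 0 := poch_ne_zero (fun t _ => by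
    have := hs (i+l+t); push_cast at this ⊢; intro hh; apply this; linarith)
  have np3 : poch (α+β+1+2*(i:ℝ)+(l:ℝ)) ((n-i-j)+1) ≠ 0 := poch_ne_zero (fun t _ => by
    have := hs (2*i+l+t); push_cast at this ⊢; intro hh; apply this; linarith)
  have np4 : poch (α+β+1+2*(i:ℝ)+(l:ℝ)+(((n-i-j)+1:ℕ):ℝ)) j ≠ 0 := poch_ne_zero (fun t _ => by
    have := hs (2*i+l+((n-i-j)+1)+t); push_cast at this ⊢; intro hh; apply this; linarith)
  have nf1 : (Nat.factorial i : ℝ) ≠ 0 := by positivity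
  have nf2 : (Nat.factorial j : ℝ) ≠ 0 := by positivity
  have nf3 : (Nat.factorial l : ℝ) ≠ 0 := by positivity
  have nf4 : (Nat.factorial ((n-i-j)-l) : ℝ) ≠ 0 := by positivity
  rw [r1, r3, r2, r4, r5, r6]
  have key : (α + β + 2 * ((i + l :ℕ):ℝ) + 1) * poch (α + β + 1) (i + l) /
          (poch (α + β + 1) (i + l) *
            (poch (α + β + 1 + ((i + l:ℕ):ℝ)) i *
              (poch (α + β + 1 + 2 * (i:ℝ) + (l:ℝ)) (n - i - j + 1) *
                poch (α + β + 1 + 2 * (i:ℝ) + (l:ℝ) + ((n - i - j + 1:ℕ):ℝ)) j))) *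
        (poch (α + β + 1 + ((i + l:ℕ):ℝ)) i / (Nat.factorial i : ℝ) *
          (poch (α + (i:ℝ) + 1) l / (Nat.factorial l : ℝ)) * ((x - 1) / 2) ^ i) *
      ((-1) ^ j * poch (α + β + 1 + 2 * (i:ℝ) + (l:ℝ) + ((n - i - j + 1:ℕ):ℝ)) j / (Nat.factorial j : ℝ) *
          ((-1) ^ (n - i - j - l) * poch (α + (i:ℝ) + 1 + (l:ℝ)) (n - i - j - l) /
            ((Nat.factorial (n - i - j - l)):ℝ)) *
        ((y - 1) / 2) ^ j)
      = ((α+β+1+2*(i:ℝ)+2*(l:ℝ)) * poch (α+(i:ℝ)+1) l * poch (α+(i:ℝ)+1+(l:ℝ)) ((n-i-j)-l) /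
          (poch (α+β+1+2*(i:ℝ)+(l:ℝ)) ((n-i-j)+1) * (Nat.factorial i : ℝ) * (Nat.factorial j : ℝ) *
            (Nat.factorial l : ℝ) * ((Nat.factorial ((n-i-j)-l)):ℝ)) *
          ((x-1)/2)^i * ((y-1)/2)^j)
        * ((-1:ℝ)^j * (-1:ℝ)^((n-i-j)-l)) := by
    push_cast at np1 np2 np3 np4 ⊢
    field_simp
    ring
  rw [key]
  have key2 : (poch (α+(i:ℝ)+1) l * poch (α+(i:ℝ)+1+(l:ℝ)) (n-i-j-l) / ((Nat.factorial i : ℝ) * (Nat.factorial j : ℝ)) *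
        ((x-1)/2)^i * ((y-1)/2)^j * (-1:ℝ)^(n-i))
      * ((-1:ℝ)^l * ((α+β+1+2*(i:ℝ))+2*(l:ℝ)) /
          (poch ((α+β+1+2*(i:ℝ))+(l:ℝ)) ((n-i-j)+1) * (Nat.factorial l : ℝ) * ((Nat.factorial ((n-i-j)-l)):ℝ)))
      = ((α+β+1+2*(i:ℝ)+2*(l:ℝ)) * poch (α+(i:ℝ)+1) l * poch (α+(i:ℝ)+1+(l:ℝ)) ((n-i-j)-l) /
          (poch (α+β+1+2*(i:ℝ)+(l:ℝ)) ((n-i-j)+1) * (Nat.factorial i : ℝ) * (Nat.factorial j : ℝ) *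
            (Nat.factorial l : ℝ) * ((Nat.factorial ((n-i-j)-l)):ℝ)) *
          ((x-1)/2)^i * ((y-1)/2)^j)
        * ((-1:ℝ)^(n-i) * (-1:ℝ)^l) := by
    field_simp
  rw [key2, hsign]

set_option maxHeartbeats 1000000 in
lemma core (α β : ℝ) (n : ℕ) (x y : ℝ) (hs : ∀ m : ℕ, α + β + 1 + (m:ℝ) ≠ 0) :
    ∑ k ∈ range (n+1), (α + β + 2*k + 1) * poch (α+β+1) k / poch (α+β+1) (n+k+1) *
        jac α β k x * jac (-(n:ℝ)-α-1) (-(n:ℝ)-β-1) (n-k) y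
      = 1/(Nat.factorial n) * ((x-y)/2)^n := by
  have h1 : ∀ k ∈ range (n+1), (α + β + 2*k + 1) * poch (α+β+1) k / poch (α+β+1) (n+k+1) *
        jac α β k x * jac (-(n:ℝ)-α-1) (-(n:ℝ)-β-1) (n-k) y
      = ∑ j ∈ range (n-k+1), ∑ i ∈ range (k+1),
        (α + β + 2*k + 1) * poch (α+β+1) k / poch (α+β+1) (n+k+1) *
          (poch ((k:ℝ)+α+β+1) i / (Nat.factorial i) * (poch (α+i+1) (k-i) / (Nat.factorial (k-i))) * ((x-1)/2)^i) *
          (poch (((n-k:ℕ):ℝ) + (-(n:ℝ)-α-1) + (-(n:ℝ)-β-1) + 1) j / (Nat.factorial j) *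
            (poch ((-(n:ℝ)-α-1) + (j:ℝ) + 1) (n-k-j) / (Nat.factorial (n-k-j))) * ((y-1)/2)^j) := by
    intro k _
    rw [jac, jac]
    simp only [Finset.mul_sum, Finset.sum_mul]
  rw [Finset.sum_congr rfl h1]
  rw [tri3 n (fun k i j =>
        (α + β + 2*k + 1) * poch (α+β+1) k / poch (α+β+1) (n+k+1) *
          (poch ((k:ℝ)+α+β+1) i / (Nat.factorial i) * (poch (α+i+1) (k-i) / (Nat.factorial (k-i))) * ((x-1)/2)^i) *
          (poch (((n-k:ℕ):ℝ) + (-(n:ℝ)-α-1) + (-(n:ℝ)-β-1) + 1) j / (Nat.factorial j) *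
            (poch ((-(n:ℝ)-α-1) + (j:ℝ) + 1) (n-k-j) / (Nat.factorial (n-k-j))) * ((y-1)/2)^j))]
  have h3 : ∀ i ∈ range (n+1), ∀ j ∈ range (n+1-i),
      ∑ l ∈ range (n+1-i-j),
        (α + β + 2*((i+l:ℕ):ℝ) + 1) * poch (α+β+1) (i+l) / poch (α+β+1) (n+(i+l)+1) *
          (poch (((i+l:ℕ):ℝ)+α+β+1) i / (Nat.factorial i) *
            (poch (α+(i:ℝ)+1) ((i+l)-i) / (Nat.factorial ((i+l)-i))) * ((x-1)/2)^i) *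
          (poch (((n-(i+l):ℕ):ℝ) + (-(n:ℝ)-α-1) + (-(n:ℝ)-β-1) + 1) j / (Nat.factorial j) *
            (poch ((-(n:ℝ)-α-1) + (j:ℝ) + 1) (n-(i+l)-j) / (Nat.factorial (n-(i+l)-j))) * ((y-1)/2)^j)
      = (poch (α+(i:ℝ)+1) (n-i-j) / ((Nat.factorial i : ℝ) * (Nat.factorial j : ℝ)) *
          ((x-1)/2)^i * ((y-1)/2)^j * (-1:ℝ)^(n-i)) * (if n-i-j = 0 then 1 else 0) := by
    intro i hi j hj
    simp only [Finset.mem_range] at hi hj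
    rw [Finset.sum_congr rfl (fun l hl => term_eq α β x y n i j l hs (by
      simp only [Finset.mem_range] at hl; omega))]
    rw [← Finset.mul_sum]
    congr 1
    rw [show n+1-i-j = (n-i-j)+1 from by omega]
    exact Ssum (α+β+1+2*(i:ℝ)) (fun m => by
      have := hs (2*i+m); push_cast at this ⊢; intro hh; apply this; linarith) (n-i-j)
  rw [Finset.sum_congr rfl (fun i hi => Finset.sum_congr rfl (h3 i hi))]
  have h4 : ∀ i ∈ range (n+1),
      ∑ j ∈ range (n+1-i),
        (poch (α+(i:ℝ)+1) (n-i-j) / ((Nat.factorial i : ℝ) * (Nat.factorial j : ℝ)) *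
          ((x-1)/2)^i * ((y-1)/2)^j * (-1:ℝ)^(n-i)) * (if n-i-j = 0 then 1 else 0)
      = (-1:ℝ)^(n-i) / ((Nat.factorial i : ℝ) * (Nat.factorial (n-i) : ℝ)) * ((x-1)/2)^i * ((y-1)/2)^(n-i) := by
    intro i hi
    simp only [Finset.mem_range] at hi
    rw [Finset.sum_eq_single (n-i)]
    · rw [show n-i-(n-i) = 0 from by omega, poch_zero, if_pos rfl]
      ring
    · intro j hj hne
      simp only [Finset.mem_range] at hj
      rw [if_neg (by omega)]
      ring
    · intro hni
      exact absurd (Finset.mem_range.mpr (by omega)) hni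
  rw [Finset.sum_congr rfl h4]
  rw [show (x-y)/2 = (x-1)/2 - (y-1)/2 from by ring, sub_pow, Finset.mul_sum]
  apply Finset.sum_congr rfl
  intro i hi
  simp only [Finset.mem_range] at hi
  have hfac : (Nat.factorial n : ℝ) = (n.choose i) * (Nat.factorial i) * (Nat.factorial (n-i)) := by
    exact_mod_cast (Nat.choose_mul_factorial_mul_factorial (by omega : i ≤ n)).symm
  have hsgn : (-1:ℝ)^(i+n) = (-1:ℝ)^(n-i) := by
    rw [show i+n = (n-i)+2*i from by omega, pow_add, pow_mul]
    norm_num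
  rw [hsgn, hfac]
  have nf1 : (Nat.factorial i : ℝ) ≠ 0 := by positivity
  have nf2 : (Nat.factorial (n-i) : ℝ) ≠ 0 := by positivity
  have nch : (n.choose i : ℝ) ≠ 0 := by
    have := Nat.choose_pos (by omega : i ≤ n); positivity
  field_simp

lemma Gamma_poch (a : ℝ) (ha : ∀ t : ℕ, a + (t:ℝ) ≠ 0) (m : ℕ) :
    Real.Gamma (a + m) = poch a m * Real.Gamma a := by
  induction m with
  | zero => simp [poch_zero]
  | succ m ih =>
    have e : a + ((m+1:ℕ):ℝ) = (a + m) + 1 := by push_cast; ring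
    rw [e, Real.Gamma_add_one (ha m), ih, poch_succ]
    ring

lemma stmt3_generic (α β : ℝ) (n : ℕ) (x y : ℝ) (hs : ∀ m : ℕ, α + β + 1 + (m:ℝ) ≠ 0) :
    ∑ k ∈ Finset.range (n + 1),
        (α + β + 2 * k + 1) * poch (α + β + 1) k / Real.Gamma (α + β + n + k + 2) *
          jac α β k x * jac (-(n : ℝ) - α - 1) (-(n : ℝ) - β - 1) (n - k) y =
      1 / Real.Gamma (α + β + 1) * (1 / (Nat.factorial n)) * ((x - y) / 2) ^ n := by
  have hG : ∀ k ∈ range (n+1),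
      (α + β + 2 * k + 1) * poch (α + β + 1) k / Real.Gamma (α + β + n + k + 2) *
          jac α β k x * jac (-(n : ℝ) - α - 1) (-(n : ℝ) - β - 1) (n - k) y
      = ((α + β + 2*k + 1) * poch (α+β+1) k / poch (α+β+1) (n+k+1) *
          jac α β k x * jac (-(n:ℝ)-α-1) (-(n:ℝ)-β-1) (n-k) y) * (Real.Gamma (α+β+1))⁻¹ := by
    intro k _
    have e : α+β+(n:ℝ)+(k:ℝ)+2 = (α+β+1) + ((n+k+1:ℕ):ℝ) := by push_cast; ring
    rw [e, Gamma_poch (α+β+1) hs (n+k+1)]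
    have hp : poch (α+β+1) (n+k+1) ≠ 0 := poch_ne_zero (fun t _ => hs t)
    have hg : Real.Gamma (α+β+1) ≠ 0 := by
      intro hzero
      have h1 := Real.Gamma_ne_zero (s := α+β+1) (fun m => by
        have := hs m; intro hh; apply this; rw [hh]; push_cast; ring)
      exact h1 hzero
    field_simp
  rw [Finset.sum_congr rfl hG, ← Finset.sum_mul, core α β n x y hs]
  ring

lemma cont_inv_Gamma : Continuous fun t : ℝ => (Real.Gamma t)⁻¹ := by
  have h := Complex.differentiable_one_div_Gamma.continuous
  have e : (fun t : ℝ => (Real.Gamma t)⁻¹) = fun t : ℝ => ((Complex.Gamma (t:ℂ))⁻¹).re := by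
    funext t
    rw [Complex.Gamma_ofReal, ← Complex.ofReal_inv, Complex.ofReal_re]
  rw [e]
  exact Complex.continuous_re.comp (h.comp Complex.continuous_ofReal)

lemma cont_poch {F : ℝ → ℝ} (hF : Continuous F) (k : ℕ) : Continuous fun a => poch (F a) k :=
  ((ascPochhammer ℝ k).continuous).comp hF

lemma cont_jac {A B : ℝ → ℝ} (hA : Continuous A) (hB : Continuous B) (m : ℕ) (z : ℝ) :
    Continuous fun a => jac (A a) (B a) m z := by
  unfold jac
  apply continuous_finset_sum
  intro i _
  apply Continuous.mul
  apply Continuous.mul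
  · exact (cont_poch (by fun_prop) i).div_const _
  · exact (cont_poch (by fun_prop) (m-i)).div_const _
  · exact continuous_const


theorem stmt3 (α β : ℝ) (n : ℕ) (x y : ℝ) :
    ∑ k ∈ Finset.range (n + 1),
        (α + β + 2 * k + 1) * poch (α + β + 1) k / Real.Gamma (α + β + n + k + 2) *
          jac α β k x * jac (-(n : ℝ) - α - 1) (-(n : ℝ) - β - 1) (n - k) y =
      1 / Real.Gamma (α + β + 1) * (1 / (Nat.factorial n)) * ((x - y) / 2) ^ n := by
  have hS : Dense (Set.range (fun m : ℕ => -β-1-(m:ℝ)))ᶜ :=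
    (Set.countable_range _).dense_compl ℝ
  have hf : Continuous (fun a : ℝ => ∑ k ∈ Finset.range (n + 1),
      (a + β + 2 * k + 1) * poch (a + β + 1) k / Real.Gamma (a + β + n + k + 2) *
        jac a β k x * jac (-(n : ℝ) - a - 1) (-(n : ℝ) - β - 1) (n - k) y) := by
    simp only [div_eq_mul_inv]
    apply continuous_finset_sum
    intro k _
    exact (((((by fun_prop : Continuous fun a:ℝ => a+β+2*(k:ℝ)+1).mul
        (cont_poch (by fun_prop) k)).mul
        (cont_inv_Gamma.comp (by fun_prop))).mul
        (cont_jac (continuous_id) (continuous_const) k x)).mul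
        (cont_jac (by fun_prop) (continuous_const) (n-k) y))
  have hg : Continuous (fun a : ℝ => 1 / Real.Gamma (a + β + 1) * (1 / (Nat.factorial n)) * ((x - y) / 2) ^ n) := by
    simp only [one_div]
    exact ((cont_inv_Gamma.comp (by fun_prop)).mul continuous_const).mul continuous_const
  have heq : Set.EqOn
      (fun a : ℝ => ∑ k ∈ Finset.range (n + 1),
        (a + β + 2 * k + 1) * poch (a + β + 1) k / Real.Gamma (a + β + n + k + 2) *
          jac a β k x * jac (-(n : ℝ) - a - 1) (-(n : ℝ) - β - 1) (n - k) y)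
      (fun a : ℝ => 1 / Real.Gamma (a + β + 1) * (1 / (Nat.factorial n)) * ((x - y) / 2) ^ n)
      (Set.range (fun m : ℕ => -β-1-(m:ℝ)))ᶜ := by
    intro a ha
    have hs' : ∀ m : ℕ, a + β + 1 + (m:ℝ) ≠ 0 := by
      intro m hcontra
      exact ha ⟨m, by show -β-1-(m:ℝ) = a; linarith⟩
    exact stmt3_generic a β n x y hs'
  have key := Continuous.ext_on hS hf hg heq
  exact congrFun key α
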